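/- Let X = (X_1,...,X_T) be a sequence of random variables over finite sets such that for every x in the support of X, the average (1/T)·Σ_{i=1}^T cp(X_i | X_{<i} = x_{<i}) ≤ α, where cp denotes collision probability. Then the collision probability of the whole sequence satisfies cp(X) ≤ α^T. -/

import Mathlib

open Finset

/-- Telescoping product of ratios. -/
lemma stmt0_tele (f : ℕ → ℝ) (hf : ∀ k, f k ≠ 0) :
    ∀ n, ∏ k ∈ Finset.range n, (f (k + 1) / f k) = f n / f 0 := by
  intro n
  induction n with
  | zero => simp [div_self (hf 0)]
  | succ n ih =>
    rw [Finset.prod_range_succ, ih]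
    rw [div_mul_div_comm, mul_comm (f n), mul_div_mul_right _ _ (hf n)]

/-- AM-GM packaged: product bounded by the `T`-th power of the average. -/
lemma stmt0_amgm {T : ℕ} (hT : 0 < T) (t : Fin T → ℝ) (ht : ∀ i, 0 ≤ t i) (α : ℝ)
    (h : (1 / T : ℝ) * ∑ i, t i ≤ α) : ∏ i, t i ≤ α ^ T := by
  have hTne : (T : ℝ) ≠ 0 := Nat.cast_ne_zero.mpr hT.ne'
  have h1 : ∏ i, t i ^ ((T : ℝ)⁻¹) ≤ (1 / T : ℝ) * ∑ i, t i := by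
    have := Real.geom_mean_le_arith_mean_weighted Finset.univ
      (fun _ : Fin T => (T : ℝ)⁻¹) t
      (fun i _ => by positivity)
      (by simp [Finset.sum_const, Finset.card_univ, mul_inv_cancel₀ hTne])
      (fun i _ => ht i)
    calc ∏ i, t i ^ ((T : ℝ)⁻¹) ≤ ∑ i, (T : ℝ)⁻¹ * t i := this
      _ = (1 / T : ℝ) * ∑ i, t i := by rw [← Finset.mul_sum, one_div]
  have h3 : 0 ≤ ∏ i, t i ^ ((T : ℝ)⁻¹) :=
    Finset.prod_nonneg fun i _ => Real.rpow_nonneg (ht i) _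
  have h4 : (∏ i, t i ^ ((T : ℝ)⁻¹)) ^ T = ∏ i, t i := by
    rw [← Finset.prod_pow]
    refine Finset.prod_congr rfl fun i _ => ?_
    rw [← Real.rpow_natCast (t i ^ ((T : ℝ)⁻¹)) T, ← Real.rpow_mul (ht i),
      inv_mul_cancel₀ hTne, Real.rpow_one]
  calc ∏ i, t i = (∏ i, t i ^ ((T : ℝ)⁻¹)) ^ T := h4.symm
    _ ≤ α ^ T := pow_le_pow_left₀ h3 (h1.trans h) T


/-- Summing a function over all updates of one coordinate. -/
lemma stmt0_sum_update {T : ℕ} (β : Fin T → Type) [∀ i, Fintype (β i)]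
    [∀ i, DecidableEq (β i)] (κ : Fin T) (F : (∀ i, β i) → ℝ) :
    ∑ x, ∑ v, F (Function.update x κ v) = (Fintype.card (β κ) : ℝ) * ∑ x, F x := by
  have hφ : Function.Involutive
      (fun z : (∀ i, β i) × β κ => (Function.update z.1 κ z.2, z.1 κ)) := by
    rintro ⟨x, v⟩
    refine Prod.ext ?_ ?_
    · simp [Function.update_idem]
    · simp
  calc ∑ x, ∑ v, F (Function.update x κ v)
      = ∑ z : (∀ i, β i) × β κ, F (Function.update z.1 κ z.2) := by
        rw [Fintype.sum_prod_type]
    _ = ∑ z : (∀ i, β i) × β κ, F z.1 :=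
        Fintype.sum_bijective _ hφ.bijective _ _ (fun z => rfl)
    _ = ∑ x, ∑ _v : β κ, F x := by rw [Fintype.sum_prod_type]
    _ = (Fintype.card (β κ) : ℝ) * ∑ x, F x := by
        simp [Finset.sum_const, Finset.card_univ, Finset.mul_sum]

/-- Key bound: if each `g i` is nonnegative, depends only on coordinates `≤ i`, and
sums to at most `1` over the `i`-th coordinate, then the total sum of products is at
most 1. -/
lemma stmt0_auxA {T : ℕ} (β : Fin T → Type) [∀ i, Fintype (β i)]
    [∀ i, DecidableEq (β i)] [∀ i, Nonempty (β i)]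
    (g : Fin T → (∀ i, β i) → ℝ)
    (hg0 : ∀ i x, 0 ≤ g i x)
    (hdep : ∀ (i : Fin T) (x y : ∀ j, β j), (∀ j, j ≤ i → x j = y j) → g i x = g i y)
    (hsum : ∀ (i : Fin T) (x : ∀ j, β j), ∑ v, g i (Function.update x i v) ≤ 1) :
    ∑ x, ∏ i, g i x ≤ 1 := by
  classical
  set s : ℕ → Finset (Fin T) := fun k => Finset.univ.filter (fun i : Fin T => (i : ℕ) < k)
    with hs_def
  set S : ℕ → ℝ := fun k => ∑ x, ∏ i ∈ s k, g i x with hS_def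
  set C : ℕ → ℝ := fun k => ∏ i ∈ s k, (Fintype.card (β i) : ℝ) with hC_def
  have key : ∀ k, C k * S k ≤ (Fintype.card (∀ i, β i) : ℝ) := by
    intro k
    induction k with
    | zero =>
      have hs0 : s 0 = ∅ := by ext i; simp [hs_def]
      simp [hS_def, hC_def, hs0, Finset.sum_const, Finset.card_univ]
    | succ k ih =>
      by_cases hk : k < T
      · set κ : Fin T := ⟨k, hk⟩ with hκ_def
        have hsins : s (k + 1) = insert κ (s k) := by
          ext i
          simp only [hs_def, Finset.mem_filter, Finset.mem_univ, true_and,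
            Finset.mem_insert, Fin.ext_iff, hκ_def]
          omega
        have hκs : κ ∉ s k := by simp [hs_def, hκ_def]
        have key2 : (Fintype.card (β κ) : ℝ) * S (k + 1) ≤ S k := by
          have e1 : (Fintype.card (β κ) : ℝ) * S (k + 1)
              = ∑ x, ∑ v, ∏ i ∈ s (k + 1), g i (Function.update x κ v) :=
            (stmt0_sum_update β κ _).symm
          have e2 : ∀ (x : ∀ j, β j) (v : β κ),
              ∏ i ∈ s (k + 1), g i (Function.update x κ v)
              = (∏ i ∈ s k, g i x) * g κ (Function.update x κ v) := by
            intro x v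
            rw [hsins, Finset.prod_insert hκs, mul_comm]
            congr 1
            refine Finset.prod_congr rfl fun i hi => ?_
            have hik : (i : ℕ) < k := by
              simpa [hs_def] using hi
            refine hdep i _ _ fun j hj => ?_
            have : j ≠ κ := by
              intro hje
              rw [hje] at hj
              have h2 : k ≤ (i : ℕ) := hj
              omega
            exact Function.update_of_ne this v x
          rw [e1]
          calc ∑ x, ∑ v, ∏ i ∈ s (k + 1), g i (Function.update x κ v)
              = ∑ x, (∏ i ∈ s k, g i x) * ∑ v, g κ (Function.update x κ v) := by
                refine Finset.sum_congr rfl fun x _ => ?_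
                rw [Finset.mul_sum]
                exact Finset.sum_congr rfl fun v _ => e2 x v
            _ ≤ ∑ x, (∏ i ∈ s k, g i x) * 1 := by
                refine Finset.sum_le_sum fun x _ => ?_
                exact mul_le_mul_of_nonneg_left (hsum κ x)
                  (Finset.prod_nonneg fun i _ => hg0 i x)
            _ = S k := by simp [hS_def]
        have hCk : C (k + 1) = (Fintype.card (β κ) : ℝ) * C k := by
          rw [hC_def]; simp only; rw [hsins, Finset.prod_insert hκs]
        have hCknn : 0 ≤ C k := Finset.prod_nonneg fun i _ => by positivity
        calc C (k + 1) * S (k + 1) = C k * ((Fintype.card (β κ) : ℝ) * S (k + 1)) := by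
              rw [hCk]; ring
          _ ≤ C k * S k := mul_le_mul_of_nonneg_left key2 hCknn
          _ ≤ _ := ih
      · have hse : s (k + 1) = s k := by
          ext i
          simp only [hs_def, Finset.mem_filter, Finset.mem_univ, true_and]
          have := i.isLt
          omega
        have h1 : C (k + 1) = C k := by rw [hC_def]; simp only [hse]
        have h2 : S (k + 1) = S k := by rw [hS_def]; simp only [hse]
        rw [h1, h2]; exact ih
  have hsT : s T = Finset.univ := by
    ext i; simp [hs_def, i.isLt]
  have hCT : C T = (Fintype.card (∀ i, β i) : ℝ) := by
    rw [hC_def]; simp only [hsT]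
    rw [Fintype.card_pi]
    push_cast
    rfl
  have hN : (0 : ℝ) < (Fintype.card (∀ i, β i) : ℝ) := by
    have : 0 < Fintype.card (∀ i, β i) := Fintype.card_pos
    exact_mod_cast this
  have := key T
  rw [hCT] at this
  have hST : S T = ∑ x, ∏ i, g i x := by rw [hS_def]; simp only [hsT]
  rw [hST] at this
  nlinarith [this, hN]

/-- If for every `x` in the support of the joint distribution `p` of
`(X_1,...,X_T)` the average conditional collision probability
`(1/T) ∑ i, cp(X_i | X_{<i} = x_{<i})` is at most `α`, then `cp(X) ≤ α^T`. -/
theorem stmt0 {T : ℕ} (hT : 0 < T) (β : Fin T → Type) [∀ i, Fintype (β i)]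
    [∀ i, DecidableEq (β i)]
    (p : (∀ i, β i) → ℝ) (hp0 : ∀ x, 0 ≤ p x) (hp1 : ∑ x, p x = 1)
    (α : ℝ)
    -- `margLt i x` = Pr[X_{<i} = x_{<i}]
    (margLt : Fin T → (∀ i, β i) → ℝ)
    (hmargLt : ∀ i x, margLt i x =
      ∑ y, if (∀ j, j < i → y j = x j) then p y else 0)
    -- `margLeVal i x v` = Pr[X_{<i} = x_{<i} ∧ X_i = v]
    (margLeVal : (i : Fin T) → (∀ j, β j) → β i → ℝ)
    (hmargLeVal : ∀ i x v, margLeVal i x v =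
      ∑ y, if (∀ j, j < i → y j = x j) ∧ y i = v then p y else 0)
    -- average conditional collision probability bound on the support
    (hcond : ∀ x, p x ≠ 0 →
      (1 / T : ℝ) * ∑ i, (∑ v, (margLeVal i x v) ^ 2) / (margLt i x) ^ 2 ≤ α) :
    ∑ x, (p x) ^ 2 ≤ α ^ T := by

  classical
  -- the support is nonempty
  have hne : ∃ x₀, p x₀ ≠ 0 := by
    by_contra h
    push_neg at h
    simp [h] at hp1
  obtain ⟨x₀, hx₀⟩ := hne
  haveI : ∀ i, Nonempty (β i) := fun i => ⟨x₀ i⟩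
  have hα : 0 ≤ α := by
    refine le_trans ?_ (hcond x₀ hx₀)
    have h1 : 0 ≤ ∑ i, (∑ v, (margLeVal i x₀ v) ^ 2) / (margLt i x₀) ^ 2 :=
      Finset.sum_nonneg fun i _ =>
        div_nonneg (Finset.sum_nonneg fun v _ => sq_nonneg _) (sq_nonneg _)
    positivity
  have hαT : 0 ≤ α ^ T := pow_nonneg hα T
  -- margLeVal depends only on earlier coordinates
  have hVdep : ∀ (i : Fin T) (x y : ∀ j, β j) (v : β i),
      (∀ j, j < i → x j = y j) → margLeVal i x v = margLeVal i y v := by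
    intro i x y v h
    rw [hmargLeVal, hmargLeVal]
    refine Finset.sum_congr rfl fun z _ => ?_
    refine if_congr (and_congr_left fun _ => ?_) rfl rfl
    constructor
    · intro h1 j hj; rw [h1 j hj, h j hj]
    · intro h1 j hj; rw [h1 j hj, h j hj]
  set D : (i : Fin T) → (∀ j, β j) → ℝ :=
    fun i x => ∑ v, (margLeVal i x v) ^ 2 with hD_def
  set g : Fin T → (∀ j, β j) → ℝ :=
    fun i x => (margLeVal i x (x i)) ^ 2 / D i x with hg_def
  have hg0 : ∀ i x, 0 ≤ g i x := fun i x =>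
    div_nonneg (sq_nonneg _) (Finset.sum_nonneg fun v _ => sq_nonneg _)
  have hDdep : ∀ (i : Fin T) (x y : ∀ j, β j),
      (∀ j, j < i → x j = y j) → D i x = D i y := by
    intro i x y h
    exact Finset.sum_congr rfl fun v _ => by rw [hVdep i x y v h]
  have hdep : ∀ (i : Fin T) (x y : ∀ j, β j),
      (∀ j, j ≤ i → x j = y j) → g i x = g i y := by
    intro i x y h
    have h1 : ∀ j, j < i → x j = y j := fun j hj => h j hj.le
    rw [hg_def]
    simp only
    rw [hVdep i x y (x i) h1, hDdep i x y h1, h i le_rfl]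
  have hsum : ∀ (i : Fin T) (x : ∀ j, β j),
      ∑ v, g i (Function.update x i v) ≤ 1 := by
    intro i x
    have h1 : ∀ v, g i (Function.update x i v) = (margLeVal i x v) ^ 2 / D i x := by
      intro v
      have h2 : ∀ w, margLeVal i (Function.update x i v) w = margLeVal i x w :=
        fun w => hVdep i _ x w (fun j hj => Function.update_of_ne (ne_of_lt hj) v x)
      have h3 : D i (Function.update x i v) = D i x :=
        hDdep i _ x (fun j hj => Function.update_of_ne (ne_of_lt hj) v x)
      rw [hg_def]
      simp only
      rw [h3, h2 _, Function.update_self]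
    simp only [h1]
    rw [← Finset.sum_div]
    have hDx : (∑ v : β i, margLeVal i x v ^ 2) = D i x := rfl
    rw [hDx]
    rcases eq_or_ne (D i x) 0 with h0 | h0
    · rw [h0, div_zero]; norm_num
    · rw [div_self h0]
  have hW : ∑ x, ∏ i, g i x ≤ 1 := stmt0_auxA β g hg0 hdep hsum
  -- pointwise bound
  have hptw : ∀ x, p x ^ 2 ≤ α ^ T * ∏ i, g i x := by
    intro x
    rcases eq_or_ne (p x) 0 with h | h
    · rw [h]
      simpa using mul_nonneg hαT (Finset.prod_nonneg fun i _ => hg0 i x)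
    · have hpx : 0 < p x := lt_of_le_of_ne (hp0 x) (Ne.symm h)
      set M : ℕ → ℝ :=
        fun k => ∑ y, if (∀ j : Fin T, (j : ℕ) < k → y j = x j) then p y else 0
        with hM_def
      have hMge : ∀ k, p x ≤ M k := by
        intro k
        have h1 := Finset.single_le_sum
          (f := fun y => if (∀ j : Fin T, (j : ℕ) < k → y j = x j) then p y else 0)
          (fun y _ => by split_ifs; exacts [hp0 y, le_rfl]) (Finset.mem_univ x)
        simpa using h1
      have hMpos : ∀ k, 0 < M k := fun k => lt_of_lt_of_le hpx (hMge k)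
      have hM0 : M 0 = 1 := by
        rw [hM_def]; simpa using hp1
      have hMT : M T = p x := by
        have he : ∀ y : (∀ i, β i),
            (∀ j : Fin T, (j : ℕ) < T → y j = x j) ↔ y = x :=
          fun y => ⟨fun hy => funext fun j => hy j j.isLt, fun hy j _ => by rw [hy]⟩
        rw [hM_def]
        simp only [he]
        simp
      have hL : ∀ i : Fin T, margLt i x = M (i : ℕ) := by
        intro i
        rw [hmargLt, hM_def]
        refine Finset.sum_congr rfl fun y _ => ?_
        refine if_congr (forall_congr' fun j => ?_) rfl rfl
        constructor
        · intro h1 hj; exact h1 hj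
        · intro h1 hj; exact h1 hj
      have hV : ∀ i : Fin T, margLeVal i x (x i) = M ((i : ℕ) + 1) := by
        intro i
        rw [hmargLeVal, hM_def]
        refine Finset.sum_congr rfl fun y _ => ?_
        refine if_congr ?_ rfl rfl
        constructor
        · rintro ⟨h1, h2⟩ j hj
          rcases Nat.lt_succ_iff_lt_or_eq.mp hj with hj' | hj'
          · exact h1 j hj'
          · have : j = i := Fin.ext hj'
            rw [this, h2]
        · intro h1
          exact ⟨fun j hj => h1 j (Nat.lt_succ_of_lt hj), h1 i (Nat.lt_succ_self _)⟩
      have tele : ∏ i : Fin T, (M ((i : ℕ) + 1) / M (i : ℕ)) = p x := by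
        rw [Fin.prod_univ_eq_prod_range (fun k => M (k + 1) / M k) T,
          stmt0_tele M (fun k => (hMpos k).ne') T, hMT, hM0, div_one]
      have hpx_eq : p x = ∏ i, margLeVal i x (x i) / margLt i x := by
        rw [← tele]
        exact Finset.prod_congr rfl fun i _ => by rw [hL, hV]
      have hVpos : ∀ i : Fin T, 0 < margLeVal i x (x i) := by
        intro i; rw [hV]; exact hMpos _
      have hLpos : ∀ i : Fin T, 0 < margLt i x := by
        intro i; rw [hL]; exact hMpos _
      have hDpos : ∀ i : Fin T, 0 < D i x := by
        intro i
        have h1 : (margLeVal i x (x i)) ^ 2 ≤ D i x := by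
          rw [hD_def]
          exact Finset.single_le_sum (f := fun v => (margLeVal i x v) ^ 2)
            (fun v _ => sq_nonneg _) (Finset.mem_univ (x i))
        exact lt_of_lt_of_le (pow_pos (hVpos i) 2) h1
      have hfactor : p x ^ 2 = (∏ i, g i x) * ∏ i, D i x / (margLt i x) ^ 2 := by
        rw [hpx_eq, ← Finset.prod_pow, ← Finset.prod_mul_distrib]
        refine Finset.prod_congr rfl fun i _ => ?_
        rw [hg_def]
        simp only
        rw [div_pow]
        field_simp
        rw [mul_div_mul_right _ _ (hDpos i).ne']
      have hprodD : ∏ i, D i x / (margLt i x) ^ 2 ≤ α ^ T := by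
        refine stmt0_amgm hT (fun i => D i x / (margLt i x) ^ 2)
          (fun i => div_nonneg (le_of_lt (hDpos i)) (sq_nonneg _)) α ?_
        exact hcond x h
      calc p x ^ 2 = (∏ i, g i x) * ∏ i, D i x / (margLt i x) ^ 2 := hfactor
        _ ≤ (∏ i, g i x) * α ^ T :=
            mul_le_mul_of_nonneg_left hprodD (Finset.prod_nonneg fun i _ => hg0 i x)
        _ = α ^ T * ∏ i, g i x := mul_comm _ _
  calc ∑ x, p x ^ 2 ≤ ∑ x, α ^ T * ∏ i, g i x := Finset.sum_le_sum fun x _ => hptw x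
    _ = α ^ T * ∑ x, ∏ i, g i x := by rw [Finset.mul_sum]
    _ ≤ α ^ T * 1 := mul_le_mul_of_nonneg_left hW hαT
    _ = α ^ T := mul_one _
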